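/- Let L ≥ 2, r ≥ 0, K ≥ 1, and let D = {(x_i, y_i)}_{i=1}^n (n ≥ 1, x_i ∈ ℝ^d, y_i ∈ [K]) be r-separated with respect to the ℓ∞-norm, with every label in [K] attained by some sample. Then there exist layer widths n_0 = d, n_L = K, and n_l ≤ ⌈n/(L−1)⌉ + K + 2d for 1 ≤ l ≤ L−1, together with parameters w^(l,i) ∈ ℝ^{n_{l−1}}, b^(l)_i ∈ ℝ, such that the L-layer ℓ∞-distance net g = F_L ∘ ⋯ ∘ F_1 (where F_l(z)_i = ‖z − w^(l,i)‖∞ + b^(l)_i) satisfies: for every k ∈ [n], every δ ∈ ℝ^d with ‖δ‖∞ ≤ r, and every j ≠ y_k, g(x_k + δ)_{y_k} > g(x_k + δ)_j. In particular an L-layer ℓ∞-distance net with hidden size at most ⌈n/(L−1)⌉ + K + 2d achieves 100% certified ℓ∞ robust accuracy on D under perturbation level ε = r. -/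
import Mathlib


/-- The composition of the first `L` layers of a network: `netComp n F L = F_{L-1} ∘ ⋯ ∘ F_0`,
where layer `F_l` maps `ℝ^{n l}` to `ℝ^{n (l+1)}`. -/
def netComp (nl : ℕ → ℕ) (F : ∀ l : ℕ, (Fin (nl l) → ℝ) → (Fin (nl (l + 1)) → ℝ)) :
    (L : ℕ) → (Fin (nl 0) → ℝ) → (Fin (nl L) → ℝ)
  | 0 => id
  | (L + 1) => fun x => F L (netComp nl F L x)

open Finset

namespace LinfNetAux

/-! ### Generic sup-norm helpers -/

lemma pi_norm_eq {ι : Type*} [Fintype ι] (v : ι → ℝ) (a : ℝ) (i₀ : ι)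
    (h1 : |v i₀| = a) (h2 : ∀ i, |v i| ≤ a) : ‖v‖ = a := by
  apply le_antisymm
  · exact (pi_norm_le_iff_of_nonneg (h1 ▸ abs_nonneg _)).2 (fun i => by
      rw [Real.norm_eq_abs]; exact h2 i)
  · calc a = |v i₀| := h1.symm
      _ = ‖v i₀‖ := (Real.norm_eq_abs _).symm
      _ ≤ ‖v‖ := norm_le_pi_norm v i₀

lemma pi_norm_attained {ι : Type*} [Fintype ι] [Nonempty ι] (v : ι → ℝ) :
    ∃ i, |v i| = ‖v‖ := by
  obtain ⟨i, -, hi⟩ := Finset.exists_mem_eq_sup (univ : Finset ι) univ_nonempty (fun i => ‖v i‖₊)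
  exact ⟨i, by rw [Pi.norm_def, hi]; simp [Real.norm_eq_abs]⟩

lemma pi_norm_comp_equiv {ι κ : Type*} [Fintype ι] [Fintype κ] (e : ι ≃ κ) (v : κ → ℝ) :
    ‖v ∘ e‖ = ‖v‖ := by
  apply le_antisymm
  · exact (pi_norm_le_iff_of_nonneg (norm_nonneg _)).2 (fun i => norm_le_pi_norm v (e i))
  · refine (pi_norm_le_iff_of_nonneg (norm_nonneg _)).2 (fun k => ?_)
    calc ‖v k‖ = ‖(v ∘ e) (e.symm k)‖ := by simp
      _ ≤ ‖v ∘ e‖ := norm_le_pi_norm _ _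

lemma abs_coord_le_pi_norm {ι : Type*} [Fintype ι] (v : ι → ℝ) (i : ι) : |v i| ≤ ‖v‖ := by
  rw [← Real.norm_eq_abs]; exact norm_le_pi_norm v i

lemma ceil_mul {n t : ℕ} (ht : 1 ≤ t) : n ≤ t * ((n + t - 1)/t) := by
  have h1 := Nat.div_add_mod (n + t - 1) t
  have h2 : (n + t - 1) % t < t := Nat.mod_lt _ ht
  set q := (n + t - 1)/t
  set rr := (n + t - 1) % t
  set p := t*q
  omega

/-! ### Index type and constants -/

abbrev Idx (d K m : ℕ) := Fin d ⊕ (Fin d ⊕ (Fin K ⊕ Fin m))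

def E (d K m : ℕ) : Idx d K m ≃ Fin (d + (d + (K + m))) :=
  (Equiv.sumCongr (Equiv.refl (Fin d))
    ((Equiv.sumCongr (Equiv.refl (Fin d)) finSumFinEquiv).trans finSumFinEquiv)).trans
    finSumFinEquiv

def Mc (X : ℝ) : ℝ := 2*X + 2
def Cc (X : ℝ) : ℝ := 2*X + 1
def Bc (X : ℝ) : ℝ := 6*X + 6

/-! ### Sample bookkeeping -/

def samp (m : ℕ) {n : ℕ} (hn : 0 < n) (l q : ℕ) : Fin n :=
  ⟨min ((l-1)*m + q) (n-1), by omega⟩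

def A {n K : ℕ} (y : Fin n → Fin K) (rep : Fin K → Fin n) (m : ℕ) (c : Fin K) (l : ℕ) :
    Finset (Fin n) :=
  Finset.univ.filter (fun i => y i = c ∧ ((i:ℕ) < (l-1)*m ∨ i = rep c))

lemma rep_mem_A {n K m : ℕ} {y : Fin n → Fin K} {rep : Fin K → Fin n} {c : Fin K} {l : ℕ}
    (hrep : y (rep c) = c) : rep c ∈ A y rep m c l := by simp [A, hrep]

lemma A_mono {n K m : ℕ} {y : Fin n → Fin K} {rep : Fin K → Fin n} {c : Fin K} {l : ℕ} :
    A y rep m c l ⊆ A y rep m c (l+1) := by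
  intro i hi
  simp only [A, Finset.mem_filter, Finset.mem_univ, true_and] at hi ⊢
  refine ⟨hi.1, ?_⟩
  rcases hi.2 with h | h
  · exact Or.inl (lt_of_lt_of_le h (Nat.mul_le_mul_right m (by omega)))
  · exact Or.inr h

lemma samp_mem_A {n K m : ℕ} {y : Fin n → Fin K} {rep : Fin K → Fin n} {c : Fin K} {l : ℕ}
    (hn : 0 < n) (hl : 1 ≤ l) (q : Fin m) (hc : y (samp m hn l q) = c) :
    samp m hn l q ∈ A y rep m c (l+1) := by
  obtain ⟨l', rfl⟩ : ∃ l', l = l' + 1 := ⟨l - 1, by omega⟩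
  simp only [A, Finset.mem_filter, Finset.mem_univ, true_and]
  refine ⟨hc, Or.inl ?_⟩
  show (min ((l'+1-1)*m + (q:ℕ)) (n-1)) < (l'+1+1-1)*m
  have hq : (q:ℕ) < m := q.isLt
  have h1 : (l'+1-1)*m = l'*m := by norm_num
  have h2 : (l'+1+1-1)*m = l'*m + m := by rw [show l'+1+1-1 = l'+1 from rfl, Nat.succ_mul]
  rw [h1, h2]
  set p := l'*m
  omega

/-! ### Values carried through the network -/

section Values

variable {d K n m : ℕ}
variable (x : Fin n → Fin d → ℝ) (y : Fin n → Fin K) (rep : Fin K → Fin n)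
variable (X : ℝ) (z : Fin d → ℝ)

def Dz (i : Fin n) : ℝ := ‖z - x i‖

def minD (m : ℕ) (hrep : ∀ c, y (rep c) = c) (c : Fin K) (l : ℕ) : ℝ :=
  (A y rep m c l).inf' ⟨rep c, rep_mem_A (hrep c)⟩ (Dz x z)

/-- the exact values carried by hidden layer `l` (for `1 ≤ l ≤ L-1`). -/
def val (hrep : ∀ c, y (rep c) = c) (hn : 0 < n) (l : ℕ) : Idx d K m → ℝ
  | .inl j => z j + Mc X
  | .inr (.inl j) => Mc X - z j
  | .inr (.inr (.inl c)) =>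
      if l = 1 then Cc X + Dz x z (rep c) else Bc X - Cc X - minD x y rep z m hrep c l
  | .inr (.inr (.inr q)) => Cc X + Dz x z (samp m hn l q)

/-- midpoint weights: default weight put on "non-signal" coordinates. -/
def midw (l : ℕ) : Idx d K m → ℝ
  | .inl _ => Mc X
  | .inr (.inl _) => Mc X
  | .inr (.inr (.inl _)) => if l = 1 then Cc X + X else Bc X - Cc X - X
  | .inr (.inr (.inr _)) => Cc X + X

variable {x y rep X z}

lemma Dz_nonneg (i : Fin n) : 0 ≤ Dz x z i := norm_nonneg _

lemma Dz_le (hX : 0 ≤ X) (hz : ∀ j, |z j| ≤ X) (hx : ∀ i j, |x i j| ≤ X) (i : Fin n) :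
    Dz x z i ≤ 2*X := by
  have h1 : ‖z‖ ≤ X := (pi_norm_le_iff_of_nonneg hX).2 (fun j => by
    rw [Real.norm_eq_abs]; exact hz j)
  have h2 : ‖x i‖ ≤ X := (pi_norm_le_iff_of_nonneg hX).2 (fun j => by
    rw [Real.norm_eq_abs]; exact hx i j)
  calc Dz x z i ≤ ‖z‖ + ‖x i‖ := norm_sub_le _ _
    _ ≤ 2*X := by linarith

lemma Dz_coord (i : Fin n) (j : Fin d) : |z j - x i j| ≤ Dz x z i := by
  have := abs_coord_le_pi_norm (z - x i) j
  simpa [Dz] using this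

variable (hrep : ∀ c, y (rep c) = c)

lemma minD_le_of_mem {c : Fin K} {l : ℕ} {i : Fin n} (h : i ∈ A y rep m c l) :
    minD x y rep z m hrep c l ≤ Dz x z i := Finset.inf'_le _ h

lemma minD_nonneg (c : Fin K) (l : ℕ) : 0 ≤ minD x y rep z m hrep c l :=
  Finset.le_inf' _ _ (fun i _ => norm_nonneg _)

lemma minD_le2X (hX : 0 ≤ X) (hz : ∀ j, |z j| ≤ X) (hx : ∀ i j, |x i j| ≤ X) (c : Fin K) (l : ℕ) : minD x y rep z m hrep c l ≤ 2*X :=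
  le_trans (minD_le_of_mem hrep (rep_mem_A (hrep c))) (Dz_le hX hz hx _)

lemma minD_succ_le (c : Fin K) (l : ℕ) :
    minD x y rep z m hrep c (l+1) ≤ minD x y rep z m hrep c l := by
  obtain ⟨i, hi, hEq⟩ := Finset.exists_mem_eq_inf' (s := A y rep m c l)
    ⟨rep c, rep_mem_A (hrep c)⟩ (Dz x z)
  rw [show minD x y rep z m hrep c l = Dz x z i from hEq]
  exact minD_le_of_mem hrep (A_mono hi)

/-- pollution bound: every carried value is within `X` of the corresponding midpoint weight. -/
lemma pollution (hn : 0 < n) (hX : 0 ≤ X) (hz : ∀ j, |z j| ≤ X) (hx : ∀ i j, |x i j| ≤ X)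
    (l : ℕ) (i : Idx d K m) :
    |val x y rep X z hrep hn l i - midw X l i| ≤ X := by
  rcases i with j | j | c | q
  · simpa [val, midw, Mc] using hz j
  · simp only [val, midw]
    rw [show Mc X - z j - Mc X = -(z j) by ring, abs_neg]
    exact hz j
  · simp only [val, midw]
    by_cases hl : l = 1 <;> simp only [hl, if_true, if_false, if_pos, if_neg, ite_true, ite_false]
    · have h1 := Dz_nonneg (x := x) (z := z) (rep c)
      have h2 := Dz_le hX hz hx (x := x) (z := z) (rep c)
      rw [abs_le]; constructor <;> [skip; skip] <;> nlinarith [h1, h2]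
    · have h1 := minD_nonneg (m := m) hrep (x := x) (z := z) c l
      have h2 := minD_le2X (m := m) hrep hX hz hx (x := x) (z := z) c l
      rw [abs_le]; constructor <;> nlinarith [h1, h2]
  · simp only [val, midw]
    have h1 := Dz_nonneg (x := x) (z := z) (samp m hn l q)
    have h2 := Dz_le hX hz hx (x := x) (z := z) (samp m hn l q)
    rw [abs_le]; constructor <;> nlinarith [h1, h2]

end Values


/-! ### Neuron weight vectors and their exact outputs -/

section Neurons

variable {d K n m : ℕ}

def wT (X : ℝ) (l : ℕ) (j : Fin d) : Idx d K m → ℝ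
  | .inl j' => if j' = j then 0 else Mc X
  | .inr (.inl _) => Mc X
  | .inr (.inr i) => midw (d := d) (K := K) (m := m) X l (.inr (.inr i))

def wS2 (X : ℝ) (l : ℕ) (j : Fin d) : Idx d K m → ℝ
  | .inl _ => Mc X
  | .inr (.inl j') => if j' = j then 0 else Mc X
  | .inr (.inr i) => midw (d := d) (K := K) (m := m) X l (.inr (.inr i))

def wC (X : ℝ) (y : Fin n → Fin K) (hn : 0 < n) (l : ℕ) (c : Fin K) : Idx d K m → ℝ
  | .inl _ => Mc X
  | .inr (.inl _) => Mc X
  | .inr (.inr (.inl c')) =>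
      if c' = c then (if l = 1 then Bc X else 0)
      else (if l = 1 then Cc X + X else Bc X - Cc X - X)
  | .inr (.inr (.inr q)) => if y (samp m hn l q) = c then Bc X else Cc X + X

def wV (x : Fin n → Fin d → ℝ) (X : ℝ) (l : ℕ) (i₀ : Fin n) : Idx d K m → ℝ
  | .inl j => x i₀ j + Mc X + Cc X
  | .inr (.inl j) => -(x i₀ j) + Mc X + Cc X
  | .inr (.inr i) => midw (d := d) (K := K) (m := m) X l (.inr (.inr i))

variable {x : Fin n → Fin d → ℝ} {y : Fin n → Fin K} {rep : Fin K → Fin n}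
  {X : ℝ} {z : Fin d → ℝ}

lemma tNeuron (hrep : ∀ c, y (rep c) = c) (hn : 0 < n) (hX : 0 ≤ X)
    (hz : ∀ j, |z j| ≤ X) (hx : ∀ i j, |x i j| ≤ X) (l : ℕ) (j : Fin d) :
    ‖val (m := m) x y rep X z hrep hn l - wT X l j‖ = z j + Mc X := by
  have hzj := abs_le.1 (hz j)
  have hXa : X ≤ z j + Mc X := by simp only [Mc]; linarith [hzj.1]
  have ha0 : (0:ℝ) ≤ z j + Mc X := by simp only [Mc]; linarith [hzj.1]
  have hpol := pollution hrep hn hX hz hx (m := m) l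
  apply pi_norm_eq _ _ (Sum.inl j)
  · simp only [Pi.sub_apply, val, wT, eq_self_iff_true, if_true, ite_true, sub_zero]
    exact abs_of_nonneg ha0
  · intro i
    rcases i with j' | j' | c | q
    · by_cases hj : j' = j
      · subst hj
        simp only [Pi.sub_apply, val, wT, eq_self_iff_true, if_true, ite_true, sub_zero]
        exact le_of_eq (abs_of_nonneg ha0)
      · have hw : wT (d := d) (K := K) (m := m) X l j (.inl j') = midw (d := d) (K := K) (m := m) X l (.inl j') := by
          simp [wT, midw, hj]
        rw [Pi.sub_apply, hw]
        exact le_trans (hpol _) hXa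
    · rw [Pi.sub_apply, show wT (d := d) (K := K) (m := m) X l j (.inr (.inl j'))
        = midw X l (.inr (.inl j')) from rfl]
      exact le_trans (hpol _) hXa
    · rw [Pi.sub_apply, show wT (d := d) (K := K) (m := m) X l j (.inr (.inr (.inl c)))
        = midw X l (.inr (.inr (.inl c))) from rfl]
      exact le_trans (hpol _) hXa
    · rw [Pi.sub_apply, show wT (d := d) (K := K) (m := m) X l j (.inr (.inr (.inr q)))
        = midw X l (.inr (.inr (.inr q))) from rfl]
      exact le_trans (hpol _) hXa

lemma sNeuron (hrep : ∀ c, y (rep c) = c) (hn : 0 < n) (hX : 0 ≤ X)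
    (hz : ∀ j, |z j| ≤ X) (hx : ∀ i j, |x i j| ≤ X) (l : ℕ) (j : Fin d) :
    ‖val (m := m) x y rep X z hrep hn l - wS2 X l j‖ = Mc X - z j := by
  have hzj := abs_le.1 (hz j)
  have hXa : X ≤ Mc X - z j := by simp only [Mc]; linarith [hzj.2]
  have ha0 : (0:ℝ) ≤ Mc X - z j := by simp only [Mc]; linarith [hzj.2]
  have hpol := pollution hrep hn hX hz hx (m := m) l
  apply pi_norm_eq _ _ (Sum.inr (Sum.inl j))
  · simp only [Pi.sub_apply, val, wS2, eq_self_iff_true, if_true, ite_true, sub_zero]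
    exact abs_of_nonneg ha0
  · intro i
    rcases i with j' | j' | c | q
    · rw [Pi.sub_apply, show wS2 (d := d) (K := K) (m := m) X l j (.inl j')
        = midw X l (.inl j') from rfl]
      exact le_trans (hpol _) hXa
    · by_cases hj : j' = j
      · subst hj
        simp only [Pi.sub_apply, val, wS2, eq_self_iff_true, if_true, ite_true, sub_zero]
        exact le_of_eq (abs_of_nonneg ha0)
      · have hw : wS2 (d := d) (K := K) (m := m) X l j (.inr (.inl j'))
            = midw (d := d) (K := K) (m := m) X l (.inr (.inl j')) := by simp [wS2, midw, hj]
        rw [Pi.sub_apply, hw]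
        exact le_trans (hpol _) hXa
    · rw [Pi.sub_apply, show wS2 (d := d) (K := K) (m := m) X l j (.inr (.inr (.inl c)))
        = midw X l (.inr (.inr (.inl c))) from rfl]
      exact le_trans (hpol _) hXa
    · rw [Pi.sub_apply, show wS2 (d := d) (K := K) (m := m) X l j (.inr (.inr (.inr q)))
        = midw X l (.inr (.inr (.inr q))) from rfl]
      exact le_trans (hpol _) hXa

lemma vNeuron (hrep : ∀ c, y (rep c) = c) (hn : 0 < n) (hd : 0 < d) (hX : 0 ≤ X)
    (hz : ∀ j, |z j| ≤ X) (hx : ∀ i j, |x i j| ≤ X) (l : ℕ) (i₀ : Fin n) :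
    ‖val (m := m) x y rep X z hrep hn l - wV x X l i₀‖ = Cc X + Dz x z i₀ := by
  have hpol := pollution hrep hn hX hz hx (m := m) l
  have hD0 := Dz_nonneg (x := x) (z := z) i₀
  have hXa : X ≤ Cc X + Dz x z i₀ := by simp only [Cc]; linarith
  haveI : Nonempty (Fin d) := ⟨⟨0, hd⟩⟩
  obtain ⟨js, hjs⟩ := pi_norm_attained (z - x i₀)
  rw [Pi.sub_apply] at hjs
  have hjs' : |z js - x i₀ js| = Dz x z i₀ := hjs
  have habs : ∀ (j : Fin d), |z j - x i₀ j| ≤ Dz x z i₀ := Dz_coord i₀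
  rcases le_or_gt (z js - x i₀ js) 0 with hsgn | hsgn
  · have hexact : z js - x i₀ js = -(Dz x z i₀) := by
      rw [← hjs', abs_of_nonpos hsgn]; ring
    apply pi_norm_eq _ _ (Sum.inl js)
    · simp only [Pi.sub_apply, val, wV]
      rw [show z js + Mc X - (x i₀ js + Mc X + Cc X) = (z js - x i₀ js) - Cc X by ring,
        hexact, show -(Dz x z i₀) - Cc X = -(Cc X + Dz x z i₀) by ring, abs_neg]
      apply abs_of_nonneg
      simp only [Cc]; linarith
    · intro i
      rcases i with j' | j' | c | q
      · simp only [Pi.sub_apply, val, wV]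
        rw [show z j' + Mc X - (x i₀ j' + Mc X + Cc X) = (z j' - x i₀ j') - Cc X by ring, abs_le]
        have := abs_le.1 (habs j')
        have hC0 : (0:ℝ) ≤ Cc X := by simp only [Cc]; linarith
        constructor <;> linarith [this.1, this.2]
      · simp only [Pi.sub_apply, val, wV]
        rw [show Mc X - z j' - (-(x i₀ j') + Mc X + Cc X) = (x i₀ j' - z j') - Cc X by ring, abs_le]
        have := abs_le.1 (habs j')
        have hC0 : (0:ℝ) ≤ Cc X := by simp only [Cc]; linarith
        constructor <;> linarith [this.1, this.2]
      · rw [Pi.sub_apply, show wV (K := K) (m := m) x X l i₀ (.inr (.inr (.inl c)))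
          = midw X l (.inr (.inr (.inl c))) from rfl]
        exact le_trans (hpol _) hXa
      · rw [Pi.sub_apply, show wV (K := K) (m := m) x X l i₀ (.inr (.inr (.inr q)))
          = midw X l (.inr (.inr (.inr q))) from rfl]
        exact le_trans (hpol _) hXa
  · have hexact : x i₀ js - z js = -(Dz x z i₀) := by
      rw [← hjs', abs_of_pos hsgn]; ring
    apply pi_norm_eq _ _ (Sum.inr (Sum.inl js))
    · simp only [Pi.sub_apply, val, wV]
      rw [show Mc X - z js - (-(x i₀ js) + Mc X + Cc X) = (x i₀ js - z js) - Cc X by ring,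
        hexact, show -(Dz x z i₀) - Cc X = -(Cc X + Dz x z i₀) by ring, abs_neg]
      apply abs_of_nonneg
      simp only [Cc]; linarith
    · intro i
      rcases i with j' | j' | c | q
      · simp only [Pi.sub_apply, val, wV]
        rw [show z j' + Mc X - (x i₀ j' + Mc X + Cc X) = (z j' - x i₀ j') - Cc X by ring, abs_le]
        have := abs_le.1 (habs j')
        have hC0 : (0:ℝ) ≤ Cc X := by simp only [Cc]; linarith
        constructor <;> linarith [this.1, this.2]
      · simp only [Pi.sub_apply, val, wV]
        rw [show Mc X - z j' - (-(x i₀ j') + Mc X + Cc X) = (x i₀ j' - z j') - Cc X by ring, abs_le]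
        have := abs_le.1 (habs j')
        have hC0 : (0:ℝ) ≤ Cc X := by simp only [Cc]; linarith
        constructor <;> linarith [this.1, this.2]
      · rw [Pi.sub_apply, show wV (K := K) (m := m) x X l i₀ (.inr (.inr (.inl c)))
          = midw X l (.inr (.inr (.inl c))) from rfl]
        exact le_trans (hpol _) hXa
      · rw [Pi.sub_apply, show wV (K := K) (m := m) x X l i₀ (.inr (.inr (.inr q)))
          = midw X l (.inr (.inr (.inr q))) from rfl]
        exact le_trans (hpol _) hXa

end Neurons


/-! ### The score neuron -/

section Score

variable {d K n m : ℕ}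
variable {x : Fin n → Fin d → ℝ} {y : Fin n → Fin K} {rep : Fin K → Fin n}
  {X : ℝ} {z : Fin d → ℝ}

lemma cNeuron (hrep : ∀ c, y (rep c) = c) (hn : 0 < n) (hX : 0 ≤ X)
    (hz : ∀ j, |z j| ≤ X) (hx : ∀ i j, |x i j| ≤ X) {l : ℕ} (hl : 1 ≤ l) (c : Fin K) :
    ‖val (m := m) x y rep X z hrep hn l - wC X y hn l c‖
      = Bc X - Cc X - minD x y rep z m hrep c (l+1) := by
  have hpol := pollution hrep hn hX hz hx (m := m) l
  set a := Bc X - Cc X - minD x y rep z m hrep c (l+1) with ha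
  have hm1 := minD_le2X (m := m) (x := x) (z := z) hrep hX hz hx c (l+1)
  have hm0 := minD_nonneg (m := m) (x := x) (z := z) hrep c (l+1)
  have hXa : X ≤ a := by simp only [ha, Bc, Cc]; linarith
  -- upper bound on every coordinate
  have hub : ∀ i, |(val (m := m) x y rep X z hrep hn l - wC X y hn l c : Idx d K m → ℝ) i| ≤ a := by
    intro i
    rcases i with j | j | c' | q
    · rw [Pi.sub_apply, show wC (d := d) (m := m) X y hn l c (.inl j)
        = midw X l (.inl j) from rfl]
      exact le_trans (hpol _) hXa
    · rw [Pi.sub_apply, show wC (d := d) (m := m) X y hn l c (.inr (.inl j))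
        = midw X l (.inr (.inl j)) from rfl]
      exact le_trans (hpol _) hXa
    · by_cases hc : c' = c
      · subst hc
        by_cases hl1 : l = 1
        · subst hl1
          simp only [Pi.sub_apply, val, wC, eq_self_iff_true, if_true, ite_true]
          have hD2 := Dz_le hX hz hx (x := x) (z := z) (rep c')
          have hD0 := Dz_nonneg (x := x) (z := z) (rep c')
          have hmle : minD x y rep z m hrep c' 2 ≤ Dz x z (rep c') :=
            minD_le_of_mem hrep (rep_mem_A (hrep c'))
          rw [abs_of_nonpos (by simp only [Bc, Cc]; linarith)]
          simp only [ha, Bc, Cc]; linarith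
        · simp only [Pi.sub_apply, val, wC, eq_self_iff_true, if_true, ite_true,
            if_neg hl1, ite_false, sub_zero]
          have hml := minD_le2X (m := m) (x := x) (z := z) hrep hX hz hx c' l
          have hml0 := minD_nonneg (m := m) (x := x) (z := z) hrep c' l
          have hstep := minD_succ_le (m := m) (x := x) (z := z) hrep c' l
          rw [abs_of_nonneg (by simp only [Bc, Cc]; linarith)]
          simp only [ha]; linarith
      · have hw : wC (d := d) (m := m) X y hn l c (.inr (.inr (.inl c')))
            = midw (d := d) (K := K) (m := m) X l (.inr (.inr (.inl c'))) := by
          simp [wC, midw, hc]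
        rw [Pi.sub_apply, hw]
        exact le_trans (hpol _) hXa
    · by_cases hcq : y (samp m hn l q) = c
      · simp only [Pi.sub_apply, val, wC, if_pos hcq]
        have hD2 := Dz_le hX hz hx (x := x) (z := z) (samp m hn l q)
        have hD0 := Dz_nonneg (x := x) (z := z) (samp m hn l q)
        have hmle : minD x y rep z m hrep c (l+1) ≤ Dz x z (samp m hn l q) :=
          minD_le_of_mem hrep (samp_mem_A hn hl q hcq)
        rw [abs_of_nonpos (by simp only [Bc, Cc]; linarith)]
        simp only [ha, Bc, Cc]; linarith
      · have hw : wC (d := d) (m := m) X y hn l c (.inr (.inr (.inr q)))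
            = midw (d := d) (K := K) (m := m) X l (.inr (.inr (.inr q))) := by
          simp [wC, midw, hcq]
        rw [Pi.sub_apply, hw]
        exact le_trans (hpol _) hXa
  -- a coordinate attaining the value
  obtain ⟨istar, histar, hmineq⟩ := Finset.exists_mem_eq_inf'
    (⟨rep c, rep_mem_A (hrep c)⟩ : (A y rep m c (l+1)).Nonempty) (Dz x z)
  have hmineq : minD x y rep z m hrep c (l+1) = Dz x z istar := hmineq
  simp only [A, Finset.mem_filter, Finset.mem_univ, true_and, Nat.add_sub_cancel] at histar
  have hyc : y istar = c := histar.1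
  have hD0s := Dz_nonneg (x := x) (z := z) istar
  have hD2s := Dz_le hX hz hx (x := x) (z := z) istar
  -- helper : witness via the own-score coordinate when `istar ∈ A c l` and `l ≥ 2`
  have ownwitness : ∀ (_ : istar ∈ A y rep m c l) (_ : l ≠ 1),
      ‖val (m := m) x y rep X z hrep hn l - wC X y hn l c‖ = a := by
    intro hmem hl1
    have heqmin : minD x y rep z m hrep c l = minD x y rep z m hrep c (l+1) := by
      apply le_antisymm
      · rw [hmineq]; exact minD_le_of_mem hrep hmem
      · exact minD_succ_le hrep c l
    apply pi_norm_eq _ _ (Sum.inr (Sum.inr (Sum.inl c))) _ hub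
    simp only [Pi.sub_apply, val, wC, eq_self_iff_true, if_true, ite_true,
      if_neg hl1, ite_false, sub_zero]
    have hml := minD_le2X (m := m) (x := x) (z := z) hrep hX hz hx c l
    have hml0 := minD_nonneg (m := m) (x := x) (z := z) hrep c l
    rw [abs_of_nonneg (by simp only [Bc, Cc]; linarith), heqmin]
  rcases histar.2 with hlt | hrepeq
  · by_cases hsm : (istar : ℕ) < (l-1)*m
    · have hl1 : l ≠ 1 := by
        intro h; rw [h] at hsm; simp at hsm
      exact ownwitness (by simp [A, hyc, Or.inl hsm]) hl1
    · -- slot witness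
      obtain ⟨l', rfl⟩ : ∃ l', l = l' + 1 := ⟨l - 1, by omega⟩
      have hlm : (l'+1)*m = l'*m + m := by rw [Nat.succ_mul]
      have hsm' : l'*m ≤ (istar : ℕ) := by
        simpa [Nat.add_sub_cancel] using Nat.le_of_not_lt hsm
      have hq : (istar : ℕ) - l'*m < m := by
        have := hlt; rw [hlm] at this; omega
      set q : Fin m := ⟨(istar : ℕ) - l'*m, hq⟩ with hqdef
      have hsamp : samp m hn (l'+1) q = istar := by
        apply Fin.ext
        simp only [samp, hqdef, Nat.add_sub_cancel]
        have h1 : l'*m + ((istar : ℕ) - l'*m) = (istar : ℕ) := by omega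
        rw [h1]
        have := istar.isLt
        omega
      apply pi_norm_eq _ _ (Sum.inr (Sum.inr (Sum.inr q))) _ hub
      simp only [Pi.sub_apply, val, wC, hsamp, if_pos hyc]
      rw [abs_of_nonpos (by simp only [Bc, Cc]; linarith), ha, hmineq]
      ring
  · -- the representative is the minimizer
    by_cases hl1 : l = 1
    · subst hl1
      apply pi_norm_eq _ _ (Sum.inr (Sum.inr (Sum.inl c))) _ hub
      simp only [Pi.sub_apply, val, wC, eq_self_iff_true, if_true, ite_true]
      rw [← hrepeq]
      rw [abs_of_nonpos (by simp only [Bc, Cc]; linarith), ha, hmineq]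
      ring
    · exact ownwitness (hrepeq ▸ rep_mem_A (hrep c)) hl1

end Score

/-! ### Input layer neurons -/

section Input

variable {d : ℕ} {X : ℝ} {z : Fin d → ℝ}

def wIT (X : ℝ) (j : Fin d) : Fin d → ℝ := fun j' => if j' = j then -(Cc X) else 0
def wIS (X : ℝ) (j : Fin d) : Fin d → ℝ := fun j' => if j' = j then Cc X else 0

lemma iTNeuron (hX : 0 ≤ X) (hz : ∀ j, |z j| ≤ X) (j : Fin d) :
    ‖z - wIT X j‖ = z j + Cc X := by
  have hzj := abs_le.1 (hz j)
  have hsig : |(z - wIT X j) j| = z j + Cc X := by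
    simp only [Pi.sub_apply, wIT, eq_self_iff_true, if_true, ite_true, sub_neg_eq_add]
    exact abs_of_nonneg (by simp only [Cc]; linarith [hzj.1])
  apply pi_norm_eq _ _ j hsig
  intro j'
  by_cases hj : j' = j
  · rw [hj]; exact le_of_eq hsig
  · simp only [Pi.sub_apply, wIT, if_neg hj, ite_false, sub_zero]
    have := abs_le.1 (hz j')
    rw [abs_le]
    constructor <;> (simp only [Cc]; linarith [this.1, this.2, hzj.1])

lemma iSNeuron (hX : 0 ≤ X) (hz : ∀ j, |z j| ≤ X) (j : Fin d) :
    ‖z - wIS X j‖ = Cc X - z j := by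
  have hzj := abs_le.1 (hz j)
  have hsig : |(z - wIS X j) j| = Cc X - z j := by
    simp only [Pi.sub_apply, wIS, eq_self_iff_true, if_true, ite_true]
    rw [show z j - Cc X = -(Cc X - z j) by ring, abs_neg]
    exact abs_of_nonneg (by simp only [Cc]; linarith [hzj.2])
  apply pi_norm_eq _ _ j hsig
  intro j'
  by_cases hj : j' = j
  · rw [hj]; exact le_of_eq hsig
  · simp only [Pi.sub_apply, wIS, if_neg hj, ite_false, sub_zero]
    have := abs_le.1 (hz j')
    rw [abs_le]
    constructor <;> (simp only [Cc]; linarith [this.1, this.2, hzj.2])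

end Input


/-! ### Assembling the network -/

section Assemble

variable {d K n m : ℕ}

def nlF (d K m L : ℕ) : ℕ → ℕ := fun l =>
  if l = 0 then d else if l < L then d + (d + (K + m)) else K

lemma nlF_zero {d K m L : ℕ} : nlF d K m L 0 = d := rfl

lemma nlF_mid {d K m L l : ℕ} (h1 : l ≠ 0) (h2 : l < L) :
    nlF d K m L l = d + (d + (K + m)) := by simp [nlF, h1, h2]

lemma nlF_top {d K m L l : ℕ} (h : L ≤ l) (h0 : l ≠ 0) : nlF d K m L l = K := by
  rw [nlF]; rw [if_neg h0, if_neg (by omega)]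

variable {x : Fin n → Fin d → ℝ} {y : Fin n → Fin K} {rep : Fin K → Fin n}
  {X : ℝ} {z : Fin d → ℝ}

def wHid (x : Fin n → Fin d → ℝ) (y : Fin n → Fin K) (X : ℝ) (hn : 0 < n) (l : ℕ) :
    Idx d K m → Idx d K m → ℝ
  | .inl j => wT X l j
  | .inr (.inl j) => wS2 X l j
  | .inr (.inr (.inl c)) => wC X y hn l c
  | .inr (.inr (.inr q)) => wV x X l (samp m hn (l+1) q)

def wInp (x : Fin n → Fin d → ℝ) (rep : Fin K → Fin n) (X : ℝ) (hn : 0 < n) :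
    Idx d K m → Fin d → ℝ
  | .inl j => wIT X j
  | .inr (.inl j) => wIS X j
  | .inr (.inr (.inl c)) => x (rep c)
  | .inr (.inr (.inr q)) => x (samp m hn 1 q)

def bInp (d K m : ℕ) (X : ℝ) : Idx d K m → ℝ
  | .inl _ => Mc X - Cc X
  | .inr (.inl _) => Mc X - Cc X
  | .inr (.inr _) => Cc X

def bigw (L : ℕ) (hL : 2 ≤ L) (hn : 0 < n) (x : Fin n → Fin d → ℝ) (y : Fin n → Fin K)
    (rep : Fin K → Fin n) (X : ℝ) (m : ℕ) :
    ∀ l, Fin (nlF d K m L (l+1)) → Fin (nlF d K m L l) → ℝ := fun l =>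
  if h0 : l = 0 then
    fun i jj => wInp x rep X hn
      ((E d K m).symm (Fin.cast (by rw [h0]; exact nlF_mid one_ne_zero (by omega)) i))
      (Fin.cast (by rw [h0]; exact nlF_zero) jj)
  else if hlt : l + 1 < L then
    fun i jj => wHid x y X hn l
      ((E d K m).symm (Fin.cast (nlF_mid (by omega) hlt) i))
      ((E d K m).symm (Fin.cast (nlF_mid h0 (by omega)) jj))
  else if heq : l + 1 = L then
    fun i jj => wC X y hn l (Fin.cast (by rw [heq]; exact nlF_top le_rfl (by omega)) i)
      ((E d K m).symm (Fin.cast (nlF_mid h0 (by omega)) jj))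
  else fun _ _ => 0

def bigb (L : ℕ) (hL : 2 ≤ L) (X : ℝ) (d K m : ℕ) : ∀ l, Fin (nlF d K m L (l+1)) → ℝ := fun l =>
  if h0 : l = 0 then
    fun i => bInp d K m X
      ((E d K m).symm (Fin.cast (by rw [h0]; exact nlF_mid one_ne_zero (by omega)) i))
  else fun _ => 0

def bigF (L : ℕ) (hL : 2 ≤ L) (hn : 0 < n) (x : Fin n → Fin d → ℝ) (y : Fin n → Fin K)
    (rep : Fin K → Fin n) (X : ℝ) (m : ℕ) :
    ∀ l, (Fin (nlF d K m L l) → ℝ) → Fin (nlF d K m L (l+1)) → ℝ :=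
  fun l u i => ‖u - bigw L hL hn x y rep X m l i‖ + bigb L hL X d K m l i

/-- first layer: from the raw input to the layer-1 values. -/
lemma inputLayer (hrep : ∀ c, y (rep c) = c) (hn : 0 < n) (hX : 0 ≤ X)
    (hz : ∀ j, |z j| ≤ X) (o : Idx d K m) :
    ‖z - wInp x rep X hn o‖ + bInp d K m X o = val (m := m) x y rep X z hrep hn 1 o := by
  rcases o with j | j | c | q
  · show ‖z - wIT X j‖ + (Mc X - Cc X) = z j + Mc X
    rw [iTNeuron hX hz j]; ring
  · show ‖z - wIS X j‖ + (Mc X - Cc X) = Mc X - z j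
    rw [iSNeuron hX hz j]; ring
  · show ‖z - x (rep c)‖ + Cc X = Cc X + Dz x z (rep c)
    rw [show Dz x z (rep c) = ‖z - x (rep c)‖ from rfl]; ring
  · show ‖z - x (samp m hn 1 q)‖ + Cc X = Cc X + Dz x z (samp m hn 1 q)
    rw [show Dz x z (samp m hn 1 q) = ‖z - x (samp m hn 1 q)‖ from rfl]; ring

/-- hidden layers: from the layer-`l` values to the layer-`l+1` values. -/
lemma hidLayer (hrep : ∀ c, y (rep c) = c) (hn : 0 < n) (hd : 0 < d) (hX : 0 ≤ X)
    (hz : ∀ j, |z j| ≤ X) (hx : ∀ i j, |x i j| ≤ X) {l : ℕ} (hl : 1 ≤ l) (o : Idx d K m) :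
    ‖val (m := m) x y rep X z hrep hn l - wHid x y X hn l o‖
      = val (m := m) x y rep X z hrep hn (l+1) o := by
  rcases o with j | j | c | q
  · exact tNeuron hrep hn hX hz hx l j
  · exact sNeuron hrep hn hX hz hx l j
  · show _ = if l + 1 = 1 then _ else Bc X - Cc X - minD x y rep z m hrep c (l+1)
    rw [if_neg (by omega)]
    exact cNeuron hrep hn hX hz hx hl c
  · exact vNeuron hrep hn hd hX hz hx l (samp m hn (l+1) q)

/-- the carried values of the network, layers `1 ≤ l ≤ L-1`. -/
lemma netComp_eq_val {L : ℕ} (hL : 2 ≤ L) (hrep : ∀ c, y (rep c) = c) (hn : 0 < n)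
    (hd : 0 < d) (hX : 0 ≤ X) (hz : ∀ j, |z j| ≤ X) (hx : ∀ i j, |x i j| ≤ X)
    {l : ℕ} (h1 : 1 ≤ l) (h2 : l ≤ L - 1) :
    netComp (nlF d K m L) (bigF L hL hn x y rep X m) l
        (fun i => z (Fin.cast (nlF_zero (L := L)) i))
      = fun i => val (m := m) x y rep X z hrep hn l
          ((E d K m).symm (Fin.cast (nlF_mid (by omega) (by omega)) i)) := by
  revert h2
  induction l, h1 using Nat.le_induction with
  | base =>
    intro h2
    funext i
    show ‖(z - wInp x rep X hn ((E d K m).symm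
          (Fin.cast (nlF_mid (L := L) one_ne_zero (by omega)) i)))
        ∘ ⇑(finCongr (nlF_zero (L := L)))‖
        + bInp d K m X ((E d K m).symm (Fin.cast (nlF_mid (L := L) one_ne_zero (by omega)) i))
      = val (m := m) x y rep X z hrep hn 1
          ((E d K m).symm (Fin.cast (nlF_mid (L := L) one_ne_zero (by omega)) i))
    rw [pi_norm_comp_equiv]
    exact inputLayer hrep hn hX hz _
  | succ l hl IH =>
    intro h2
    have hlt : l + 1 < L := by omega
    have hl0 : l ≠ 0 := by omega
    have hIH := IH (by omega)
    funext i
    show ‖netComp (nlF d K m L) (bigF L hL hn x y rep X m) l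
          (fun i' => z (Fin.cast (nlF_zero (L := L)) i'))
        - bigw L hL hn x y rep X m l i‖ + bigb L hL X d K m l i = _
    rw [hIH]
    rw [show bigw L hL hn x y rep X m l = fun i jj => wHid x y X hn l
          ((E d K m).symm (Fin.cast (nlF_mid (Nat.succ_ne_zero l) hlt) i))
          ((E d K m).symm (Fin.cast (nlF_mid hl0 (by omega)) jj))
        from by simp only [bigw]; rw [dif_neg hl0, dif_pos hlt]]
    set o : Idx d K m := (E d K m).symm
      (Fin.cast (nlF_mid (L := L) (Nat.succ_ne_zero l) hlt) i) with ho
    set e : Fin (nlF d K m L l) ≃ Idx d K m :=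
      (finCongr (nlF_mid (L := L) hl0 (by omega))).trans (E d K m).symm with he
    show ‖(val (m := m) x y rep X z hrep hn l - wHid x y X hn l o) ∘ ⇑e‖
        + bigb L hL X d K m l i = _
    rw [pi_norm_comp_equiv e, hidLayer hrep hn hd hX hz hx hl o,
      show bigb L hL X d K m l i = 0 by rw [bigb, dif_neg hl0], add_zero]

end Assemble



section Last

variable {d K n m : ℕ}
variable {x : Fin n → Fin d → ℝ} {y : Fin n → Fin K} {rep : Fin K → Fin n}
  {X : ℝ} {z : Fin d → ℝ}

lemma netComp_last {L : ℕ} (hL : 2 ≤ L) (hrep : ∀ c, y (rep c) = c) (hn : 0 < n)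
    (hd : 0 < d) (hX : 0 ≤ X) (hz : ∀ j, |z j| ≤ X) (hx : ∀ i j, |x i j| ≤ X)
    (c : Fin (nlF d K m L L)) :
    netComp (nlF d K m L) (bigF L hL hn x y rep X m) L
        (fun i => z (Fin.cast (nlF_zero (L := L)) i)) c
      = Bc X - Cc X
        - minD x y rep z m hrep (Fin.cast (nlF_top (L := L) le_rfl (by omega)) c) L := by
  obtain ⟨t, rfl⟩ : ∃ t, L = t + 1 := ⟨L - 1, by omega⟩
  have ht : 1 ≤ t := by omega
  have ht0 : t ≠ 0 := by omega
  have hnlt : ¬ (t + 1 < t + 1) := lt_irrefl _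
  show ‖netComp (nlF d K m (t+1)) (bigF (t+1) hL hn x y rep X m) t
      (fun i => z (Fin.cast (nlF_zero (L := t+1)) i)) - bigw (t+1) hL hn x y rep X m t c‖
      + bigb (t+1) hL X d K m t c = _
  rw [netComp_eq_val hL hrep hn hd hX hz hx ht (by omega)]
  rw [show bigw (t+1) hL hn x y rep X m t = fun i jj => wC X y hn t
        (Fin.cast (nlF_top (L := t+1) le_rfl (by omega)) i)
        ((E d K m).symm (Fin.cast (nlF_mid ht0 (by omega)) jj))
      from by simp only [bigw]; rw [dif_neg ht0, dif_neg hnlt]; simp]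
  set cc : Fin K := Fin.cast (nlF_top (L := t+1) le_rfl (by omega)) c with hcc
  set e : Fin (nlF d K m (t+1) t) ≃ Idx d K m :=
    (finCongr (nlF_mid (L := t+1) ht0 (by omega))).trans (E d K m).symm with he
  show ‖(val (m := m) x y rep X z hrep hn t - wC X y hn t cc) ∘ ⇑e‖
      + bigb (t+1) hL X d K m t c = _
  rw [pi_norm_comp_equiv e, cNeuron hrep hn hX hz hx ht cc,
    show bigb (t+1) hL X d K m t c = 0 by rw [bigb, dif_neg ht0], add_zero]

end Last

end LinfNetAux

open LinfNetAux

/-- Multi-layer extension of Theorem 1 (appendix of the paper): for any r-separated dataset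
(w.r.t. ℓ∞) and any `L ≥ 2`, there exists an `L`-layer ℓ∞-distance net with input width `d`,
output width `K`, and all hidden widths at most `⌈n/(L-1)⌉ + K + 2d`, achieving 100% certified
ℓ∞ robust accuracy on the dataset at perturbation level `ε = r`. -/
theorem exists_multi_layer_linf_net_certified_robust
    (d K n L : ℕ) (hL : 2 ≤ L) (hn : 1 ≤ n) (hK : 1 ≤ K)
    (r : ℝ) (hr : 0 ≤ r)
    (x : Fin n → (Fin d → ℝ)) (y : Fin n → Fin K)
    (hsep : ∀ i j : Fin n, y i ≠ y j → ‖x i - x j‖ > 2 * r)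
    (hsurj : ∀ j : Fin K, ∃ i : Fin n, y i = j) :
    ∃ (nl : ℕ → ℕ) (h0 : nl 0 = d) (hLK : nl L = K),
      (∀ l : ℕ, 1 ≤ l → l ≤ L - 1 → nl l ≤ (n + (L - 1) - 1) / (L - 1) + K + 2 * d) ∧
      ∃ F : ∀ l : ℕ, (Fin (nl l) → ℝ) → (Fin (nl (l + 1)) → ℝ),
        (∀ l, l < L → ∃ (w : Fin (nl (l + 1)) → (Fin (nl l) → ℝ)) (b : Fin (nl (l + 1)) → ℝ),
          ∀ (z : Fin (nl l) → ℝ) (i : Fin (nl (l + 1))), F l z i = ‖z - w i‖ + b i) ∧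
        ∀ k : Fin n, ∀ δ : Fin d → ℝ, ‖δ‖ ≤ r → ∀ j : Fin K, j ≠ y k →
          netComp nl F L (fun i => (x k + δ) (Fin.cast h0 i)) (Fin.cast hLK.symm (y k)) >
          netComp nl F L (fun i => (x k + δ) (Fin.cast h0 i)) (Fin.cast hLK.symm j) := by
  by_cases hd0 : d = 0
  · -- degenerate case: all inputs coincide, so all labels are equal and the claim is vacuous
    have hall : ∀ i i' : Fin n, y i = y i' := by
      intro i i'
      by_contra hne
      have h1 := hsep i i' hne
      have h2 : x i - x i' = 0 := funext (fun jj => absurd jj.isLt (by omega))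
      rw [h2, norm_zero] at h1
      linarith
    refine ⟨fun l => if l = 0 then d else if l < L then 1 else K, by simp, ?_, ?_, ?_⟩
    · simp only [if_neg (by omega : ¬ L = 0), if_neg (lt_irrefl L)]
    · intro l h1 h2
      simp only [if_neg (by omega : ¬ l = 0), if_pos (by omega : l < L)]
      exact le_trans hK (le_trans (Nat.le_add_left K _) (Nat.le_add_right _ _))
    · refine ⟨fun l u i => ‖u - (fun _ => (0:ℝ))‖ + 0, fun l _ =>
        ⟨fun _ _ => 0, fun _ => 0, fun u i => rfl⟩, ?_⟩
      intro k δ hδ j hj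
      obtain ⟨i, hi⟩ := hsurj j
      exact absurd (hi ▸ hall i k) hj
  · -- main case
    have hd : 0 < d := by omega
    have hn' : 0 < n := hn
    haveI : Nonempty (Fin n) := ⟨⟨0, hn⟩⟩
    set m := (n + (L - 1) - 1) / (L - 1) with hm
    have hnm : n ≤ (L-1) * m := ceil_mul (by omega)
    set X0 := Finset.univ.sup' Finset.univ_nonempty (fun i => ‖x i‖) with hX0def
    set X := X0 + r with hXdef
    have hX0i : ∀ i, ‖x i‖ ≤ X0 := fun i => Finset.le_sup' (fun i => ‖x i‖) (Finset.mem_univ i)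
    have hX : 0 ≤ X := by
      have h1 := hX0i ⟨0, hn⟩
      have h2 := norm_nonneg (x ⟨0, hn⟩)
      simp only [hXdef]; linarith
    have hxb : ∀ i jj, |x i jj| ≤ X := by
      intro i jj
      have h1 := abs_coord_le_pi_norm (x i) jj
      have h2 := hX0i i
      simp only [hXdef]; linarith
    set rep : Fin K → Fin n := fun c => (hsurj c).choose with hrepdef
    have hrep : ∀ c, y (rep c) = c := fun c => (hsurj c).choose_spec
    refine ⟨nlF d K m L, nlF_zero, nlF_top le_rfl (by omega), ?_,
      bigF L hL hn' x y rep X m, ?_, ?_⟩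
    · intro l h1 h2
      rw [nlF_mid (by omega) (by omega)]
      omega
    · intro l _
      exact ⟨bigw L hL hn' x y rep X m l, bigb L hL X d K m l, fun u i => rfl⟩
    · intro k δ hδ j hj
      set z : Fin d → ℝ := x k + δ with hzdef
      have hzb : ∀ jj, |z jj| ≤ X := by
        intro jj
        have h1 : |x k jj| ≤ X0 := le_trans (abs_coord_le_pi_norm (x k) jj) (hX0i k)
        have h2 : |δ jj| ≤ r := le_trans (abs_coord_le_pi_norm δ jj) hδ
        calc |z jj| = |x k jj + δ jj| := rfl
          _ ≤ |x k jj| + |δ jj| := abs_add_le _ _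
          _ ≤ X := by simp only [hXdef]; linarith
      have hout := netComp_last (m := m) (z := z) hL hrep hn' hd hX hzb hxb
      rw [show (fun i => (x k + δ) (Fin.cast nlF_zero i))
          = (fun i => z (Fin.cast (nlF_zero (L := L)) i)) from rfl]
      rw [hout, hout]
      have hcast : ∀ c : Fin K, Fin.cast (nlF_top (d := d) (K := K) (m := m) (L := L)
          le_rfl (by omega)) (Fin.cast (nlF_top le_rfl (by omega)).symm c) = c := by
        intro c; apply Fin.ext; simp
      rw [hcast, hcast]
      have hyk : minD x y rep z m hrep (y k) L ≤ r := by
        have hkmem : k ∈ A y rep m (y k) L := by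
          simp only [A, Finset.mem_filter, Finset.mem_univ, true_and, eq_self_iff_true]
          exact Or.inl (lt_of_lt_of_le k.isLt hnm)
        have hdk : Dz x z k = ‖δ‖ := by
          rw [Dz]
          congr 1
          funext jj
          show z jj - x k jj = δ jj
          simp only [hzdef, Pi.add_apply]; ring
        have := minD_le_of_mem (x := x) (z := z) hrep hkmem
        rw [hdk] at this
        linarith
      have hjlow : r < minD x y rep z m hrep j L := by
        obtain ⟨is, hism, hise⟩ := Finset.exists_mem_eq_inf'
          (⟨rep j, rep_mem_A (hrep j)⟩ : (A y rep m j L).Nonempty) (Dz x z)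
        simp only [A, Finset.mem_filter, Finset.mem_univ, true_and] at hism
        have hyis : y k ≠ y is := by rw [hism.1]; exact fun h => hj h.symm
        have hsep' := hsep k is hyis
        have htri : ‖x k - x is‖ ≤ Dz x z is + ‖δ‖ := by
          have hdec : x k - x is = (z - x is) - δ := by
            funext jj
            simp only [hzdef, Pi.sub_apply, Pi.add_apply]; ring
          rw [hdec]
          exact norm_sub_le _ _
        have heq : minD x y rep z m hrep j L = Dz x z is := hise
        rw [heq]
        linarith [htri, hsep', hδ]
      linarith [hyk, hjlow]
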